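/- (Lemma 1, part 2.) Consider the constrained optimal control problem: maximize J(x₀,u) = ∑_{t=0}^{t_f} L(x_t,u_t) over input sequences subject to x_{t+1} = f(x_t,u_t), u_t ≤ u_max, and h(x_t,u_t) ≤ y_max for all t. Assume: (A1) L is continuous and increasing in (x,u); (A2) f is continuous and monotone on R̄(x₀,t_f) × (−∞,u_max]; (A3) each h_i is continuous on ℝ^n × (−∞,u_max] and strictly increasing in u for every x ∈ R̄(x₀,t_f). If an optimal solution exists, then there exists an optimal solution u* with trajectory x* under which at least one inequality constraint is active at the final time: either u*_{t_f} = u_max, or h_i(x*_{t_f}, u*_{t_f}) = (y_max)_i for some i ∈ {1,…,p}. -/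
import Mathlib


open Finset Set

/-- Trajectory of `x_{t+1} = f(x_t,u_t)` from `x₀` under input sequence `u`. -/
noncomputable def traj {n : ℕ} (f : (Fin n → ℝ) → ℝ → (Fin n → ℝ)) (x₀ : Fin n → ℝ)
    (u : ℕ → ℝ) : ℕ → (Fin n → ℝ)
  | 0 => x₀
  | t + 1 => f (traj f x₀ u t) (u t)

/-- An input sequence is feasible if `u_t ≤ u_max` and `h(x_t,u_t) ≤ y_max`
componentwise for all `t ∈ {0,…,t_f}`. -/
def Feasible {n p : ℕ} (f : (Fin n → ℝ) → ℝ → (Fin n → ℝ))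
    (h : (Fin n → ℝ) → ℝ → (Fin p → ℝ)) (x₀ : Fin n → ℝ)
    (umax : ℝ) (ymax : Fin p → ℝ) (tf : ℕ) (u : ℕ → ℝ) : Prop :=
  ∀ t ≤ tf, u t ≤ umax ∧ ∀ i, h (traj f x₀ u t) (u t) i ≤ ymax i

/-- The total cost `J(x₀,u) = ∑_{t=0}^{t_f} L(x_t,u_t)`. -/
noncomputable def Cost {n : ℕ} (f : (Fin n → ℝ) → ℝ → (Fin n → ℝ))
    (L : (Fin n → ℝ) → ℝ → ℝ) (x₀ : Fin n → ℝ) (tf : ℕ) (u : ℕ → ℝ) : ℝ :=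
  ∑ t ∈ Finset.range (tf + 1), L (traj f x₀ u t) (u t)

/-- `u` is optimal if it is feasible and its cost dominates that of every feasible sequence. -/
def Optimal {n p : ℕ} (f : (Fin n → ℝ) → ℝ → (Fin n → ℝ))
    (h : (Fin n → ℝ) → ℝ → (Fin p → ℝ)) (L : (Fin n → ℝ) → ℝ → ℝ)
    (x₀ : Fin n → ℝ) (umax : ℝ) (ymax : Fin p → ℝ) (tf : ℕ) (u : ℕ → ℝ) : Prop :=
  Feasible f h x₀ umax ymax tf u ∧
    ∀ v, Feasible f h x₀ umax ymax tf v → Cost f L x₀ tf v ≤ Cost f L x₀ tf u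

/-- `R̄(x₀,t_f)`: all states visited at some time `t ≤ t_f` by some feasible trajectory. -/
def Reach {n p : ℕ} (f : (Fin n → ℝ) → ℝ → (Fin n → ℝ))
    (h : (Fin n → ℝ) → ℝ → (Fin p → ℝ)) (x₀ : Fin n → ℝ)
    (umax : ℝ) (ymax : Fin p → ℝ) (tf : ℕ) : Set (Fin n → ℝ) :=
  {z | ∃ u, Feasible f h x₀ umax ymax tf u ∧ ∃ t ≤ tf, traj f x₀ u t = z}


lemma traj_congr {n : ℕ} (f : (Fin n → ℝ) → ℝ → (Fin n → ℝ)) (x₀ : Fin n → ℝ)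
    (u v : ℕ → ℝ) : ∀ t, (∀ s < t, u s = v s) → traj f x₀ u t = traj f x₀ v t
  | 0, _ => rfl
  | t + 1, h => by
    simp only [traj]
    rw [traj_congr f x₀ u v t (fun s hs => h s (Nat.lt_succ_of_lt hs)),
      h t (Nat.lt_succ_self t)]

/-- Lemma 1, part 2: under the monotonicity assumptions, there is an optimal
solution under which at least one inequality constraint is active at the final time. -/
theorem exists_optimal_active_constraint_at_final_time {n p tf : ℕ}
    (f : (Fin n → ℝ) → ℝ → (Fin n → ℝ))
    (h : (Fin n → ℝ) → ℝ → (Fin p → ℝ))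
    (L : (Fin n → ℝ) → ℝ → ℝ)
    (x₀ : Fin n → ℝ) (umax : ℝ) (ymax : Fin p → ℝ)
    -- (A1) monotone cost
    (hLcont : Continuous fun q : (Fin n → ℝ) × ℝ => L q.1 q.2)
    (hLmono : ∀ (x₁ x₂ : Fin n → ℝ) (u₁ u₂ : ℝ), x₂ ≤ x₁ → u₂ ≤ u₁ → L x₂ u₂ ≤ L x₁ u₁)
    -- (A2) monotone system
    (hfcont : Continuous fun q : (Fin n → ℝ) × ℝ => f q.1 q.2)
    (hfmono : ∀ x₁ x₂ : Fin n → ℝ, x₁ ∈ Reach f h x₀ umax ymax tf →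
      x₂ ∈ Reach f h x₀ umax ymax tf → ∀ u₁ u₂ : ℝ, u₁ ≤ umax → u₂ ≤ umax →
      x₂ ≤ x₁ → u₂ ≤ u₁ → f x₂ u₂ ≤ f x₁ u₁)
    -- (A3) monotone constraint
    (hhcont : ∀ i, ContinuousOn (fun q : (Fin n → ℝ) × ℝ => h q.1 q.2 i)
      (Set.univ ×ˢ Set.Iic umax))
    (hhmono : ∀ x ∈ Reach f h x₀ umax ymax tf, ∀ i, StrictMono fun v => h x v i)
    -- an optimal solution exists
    (hex : ∃ u, Optimal f h L x₀ umax ymax tf u) :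
    ∃ ustar, Optimal f h L x₀ umax ymax tf ustar ∧
      (ustar tf = umax ∨ ∃ i, h (traj f x₀ ustar tf) (ustar tf) i = ymax i) := by
  obtain ⟨u, hu⟩ := hex
  set x := traj f x₀ u tf with hx
  set S : Set ℝ := {v | v ≤ umax ∧ ∀ i, h x v i ≤ ymax i} with hS
  have hmemu : u tf ∈ S := ⟨(hu.1 tf le_rfl).1, (hu.1 tf le_rfl).2⟩
  have hbdd : BddAbove S := ⟨umax, fun v hv => hv.1⟩
  have hne : S.Nonempty := ⟨u tf, hmemu⟩
  have hgc : ∀ i, ContinuousOn (fun v => h x v i) (Set.Iic umax) := by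
    intro i
    have := (hhcont i).comp
      (Continuous.continuousOn (by continuity : Continuous fun v : ℝ => ((x, v) : (Fin n → ℝ) × ℝ)))
      (fun v hv => ⟨trivial, hv⟩)
    exact this
  have hclosed : IsClosed S := by
    have hEq : S = Set.Iic umax ∩ ⋂ i,
        (Set.Iic umax ∩ (fun v => h x v i) ⁻¹' Set.Iic (ymax i)) := by
      ext v
      simp only [hS, Set.mem_setOf_eq, Set.mem_inter_iff, Set.mem_iInter, Set.mem_Iic,
        Set.mem_preimage]
      constructor
      · rintro ⟨h1, h2⟩; exact ⟨h1, fun i => ⟨h1, h2 i⟩⟩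
      · rintro ⟨h1, h2⟩; exact ⟨h1, fun i => (h2 i).2⟩
    rw [hEq]
    exact isClosed_Iic.inter (isClosed_iInter fun i =>
      (hgc i).preimage_isClosed_of_isClosed isClosed_Iic isClosed_Iic)
  set vs := sSup S with hvs
  have hvsS : vs ∈ S := hclosed.csSup_mem hne hbdd
  have hule : u tf ≤ vs := le_csSup hbdd hmemu
  set us : ℕ → ℝ := Function.update u tf vs with hus
  have hne' : ∀ s, s ≠ tf → us s = u s := fun s hs => Function.update_of_ne hs _ _
  have htraj : ∀ t, t ≤ tf → traj f x₀ us t = traj f x₀ u t := by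
    intro t ht
    exact traj_congr f x₀ us u t (fun s hs => hne' s (by omega))
  have hustf : us tf = vs := Function.update_self _ _ _
  have hfeas : Feasible f h x₀ umax ymax tf us := by
    intro t ht
    rcases eq_or_lt_of_le ht with rfl | hlt
    · rw [hustf, htraj t le_rfl, ← hx]
      exact ⟨hvsS.1, hvsS.2⟩
    · rw [hne' t (by omega), htraj t ht]
      exact hu.1 t ht
  have hcost : Cost f L x₀ tf u ≤ Cost f L x₀ tf us := by
    apply Finset.sum_le_sum
    intro t ht
    rw [Finset.mem_range] at ht
    rcases eq_or_lt_of_le (Nat.lt_succ_iff.mp ht) with rfl | hlt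
    · rw [hustf, htraj t le_rfl]
      exact hLmono _ _ _ _ le_rfl hule
    · rw [hne' t (by omega), htraj t (by omega)]
  refine ⟨us, ⟨hfeas, fun v hv => le_trans (hu.2 v hv) hcost⟩, ?_⟩
  by_contra hcon
  push_neg at hcon
  obtain ⟨h1, h2⟩ := hcon
  rw [hustf] at h1
  have hlt : vs < umax := lt_of_le_of_ne hvsS.1 h1
  have hstrict : ∀ i, h x vs i < ymax i := by
    intro i
    refine lt_of_le_of_ne (hvsS.2 i) ?_
    have := h2 i
    rwa [htraj tf le_rfl, hustf, ← hx] at this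
  have hIic : Set.Iic umax ∈ nhds vs := Iic_mem_nhds hlt
  have hCA : ∀ i, ContinuousAt (fun v => h x v i) vs := fun i =>
    (hgc i).continuousAt hIic
  have hev : ∀ᶠ v in nhds vs, ∀ i, h x v i < ymax i :=
    Filter.eventually_all.2 fun i => (hCA i).eventually_lt_const (hstrict i)
  have hevS : ∀ᶠ v in nhds vs, v ∈ S := by
    filter_upwards [hIic, hev] with v h1' h2'
    exact ⟨h1', fun i => le_of_lt (h2' i)⟩
  rcases Metric.mem_nhds_iff.1 hevS with ⟨ε, hε, hball⟩
  have hw : vs + ε / 2 ∈ S := by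
    apply hball
    rw [Metric.mem_ball, Real.dist_eq]
    rw [show vs + ε / 2 - vs = ε / 2 by ring, abs_of_pos (by linarith)]
    linarith
  have : vs + ε / 2 ≤ vs := le_csSup hbdd hw
  linarith
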